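/- arXiv:1911.07210 — 8 statements merged into one kernel-verified Lean document; each statement's English description precedes it below -/
import Mathlib

section
/- Fix real numbers x, y with 0 ≤ y ≤ x ≤ 1 and q with 1/2 ≤ q ≤ 1. For every Borel probability measure μ on the real line with μ([0,1]) = 1, we have q·∫(u1t(θ) − u1a(θ)) dμ(θ) + (1−q)·∫(u2t(θ) − u2a(θ)) dμ(θ) ≥ 0. (This establishes that for two bidders the granularity threshold for a one-item-demand attacker is at most 1/2: for q ≥ 1/2 no false-name attack of the form (1,x),(1,y) is beneficial in expectation for a 1-type bidder, for any per-item value distribution.) -/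
open MeasureTheory

/-- A 1-type attacker of true value 1 in a two-item VCG auction with two bidders:
truthful utility minus attack utility, against a 1-type adversary of value θ. -/
noncomputable def u1t (θ : ℝ) : ℝ := 1

noncomputable def u1a (y θ : ℝ) : ℝ := if θ ≤ y then 1 - 2 * θ else 1 - y

noncomputable def u2t (θ : ℝ) : ℝ := if θ ≤ 1 / 2 then 1 - 2 * θ else 0

noncomputable def u2a (x y θ : ℝ) : ℝ :=
  if θ ≤ y / 2 then 1
  else if θ ≤ x / 2 then 1 - 2 * θ + y
  else if θ ≤ (x + y) / 2 then 1 - 4 * θ + y + x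
  else 0

lemma meas1 (y : ℝ) : Measurable (fun θ => u1t θ - u1a y θ) := by
  unfold u1t u1a
  exact measurable_const.sub (Measurable.ite (measurableSet_le measurable_id measurable_const)
    (measurable_const.sub (measurable_const.mul measurable_id)) measurable_const)

lemma meas2 (x y : ℝ) : Measurable (fun θ => u2t θ - u2a x y θ) := by
  unfold u2t u2a
  refine Measurable.sub ?_ ?_
  · exact Measurable.ite (measurableSet_le measurable_id measurable_const)
      (measurable_const.sub (measurable_const.mul measurable_id)) measurable_const
  · refine Measurable.ite (measurableSet_le measurable_id measurable_const) measurable_const ?_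
    refine Measurable.ite (measurableSet_le measurable_id measurable_const)
      ((measurable_const.sub (measurable_const.mul measurable_id)).add measurable_const) ?_
    exact Measurable.ite (measurableSet_le measurable_id measurable_const)
      (((measurable_const.sub (measurable_const.mul measurable_id)).add
        measurable_const).add measurable_const) measurable_const

set_option maxHeartbeats 2000000 in
theorem stmt_0 (x y q : ℝ) (hy : 0 ≤ y) (hyx : y ≤ x) (hx : x ≤ 1)
    (hq : 1 / 2 ≤ q) (hq1 : q ≤ 1)
    (μ : Measure ℝ) [IsProbabilityMeasure μ] (hμ : μ (Set.Icc 0 1) = 1) :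
    q * (∫ θ, (u1t θ - u1a y θ) ∂μ) + (1 - q) * (∫ θ, (u2t θ - u2a x y θ) ∂μ) ≥ 0 := by
  have hae : ∀ᵐ θ ∂μ, θ ∈ Set.Icc (0:ℝ) 1 := by
    rw [ae_iff]
    have h : {θ : ℝ | ¬ θ ∈ Set.Icc (0:ℝ) 1} = (Set.Icc (0:ℝ) 1)ᶜ := rfl
    rw [h, measure_compl measurableSet_Icc (measure_ne_top μ _), hμ, measure_univ, tsub_self]
  have hint1 : Integrable (fun θ => u1t θ - u1a y θ) μ := by
    refine Integrable.mono' (integrable_const (10:ℝ)) (meas1 y).aestronglyMeasurable ?_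
    filter_upwards [hae] with θ hθ
    obtain ⟨h0, h1⟩ := hθ
    simp only [u1t, u1a, Real.norm_eq_abs]
    split_ifs <;> rw [abs_le] <;> constructor <;> nlinarith
  have hint2 : Integrable (fun θ => u2t θ - u2a x y θ) μ := by
    refine Integrable.mono' (integrable_const (10:ℝ)) (meas2 x y).aestronglyMeasurable ?_
    filter_upwards [hae] with θ hθ
    obtain ⟨h0, h1⟩ := hθ
    simp only [u2t, u2a, Real.norm_eq_abs]
    split_ifs <;> rw [abs_le] <;> constructor <;> nlinarith
  have key : q * (∫ θ, (u1t θ - u1a y θ) ∂μ) + (1 - q) * (∫ θ, (u2t θ - u2a x y θ) ∂μ)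
      = ∫ θ, (q * (u1t θ - u1a y θ) + (1 - q) * (u2t θ - u2a x y θ)) ∂μ := by
    rw [integral_add (hint1.const_mul q) (hint2.const_mul (1-q)),
      integral_const_mul, integral_const_mul]
  rw [ge_iff_le, key]
  refine integral_nonneg_of_ae ?_
  have hq0 : (0:ℝ) ≤ q := by linarith
  have hq2 : (0:ℝ) ≤ 2*q - 1 := by linarith
  have h1q : (0:ℝ) ≤ 1 - q := by linarith
  filter_upwards [hae] with θ hθ
  obtain ⟨h0, h1⟩ := hθ
  simp only [Pi.zero_apply, u1t, u1a, u2t, u2a]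
  split_ifs <;>
    nlinarith [mul_nonneg hq2 h0, mul_nonneg hq2 hy, mul_nonneg hq0 h0, mul_nonneg h1q h0,
      mul_nonneg hq0 hy, mul_nonneg h1q hy]
end

section
/- For all real numbers x, y, θ with 0 ≤ y ≤ x ≤ 1 and 0 ≤ θ ≤ 1, the pointwise inequality (u1t(θ) − u1a(θ)) + (u2t(θ) − u2a(θ)) ≥ 0 holds. -/
theorem stmt_1 (x y θ : ℝ) (hy : 0 ≤ y) (hyx : y ≤ x) (hx : x ≤ 1)
    (hθ0 : 0 ≤ θ) (hθ1 : θ ≤ 1) :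
    (u1t θ - u1a y θ) + (u2t θ - u2a x y θ) ≥ 0 := by
  unfold u1t u1a u2t u2a
  split_ifs with h1 h2 h3 h4 h5 <;> (try push_neg at *) <;> nlinarith [sq_nonneg (x-y), sq_nonneg θ]
end

section
/- Let m ≥ 2 be an integer and let q be a real number with 0 < q < 1. Define ε = min{ (1−q)/(3000·q·m), 1/1000, (1 − (1/5)^{1/m})/2, 1 − (1 − (1−q)^m/300)^{1/m} }. Then ε > 0, and 3·(1 − (1−ε)^m) + 0.3·m·(1−2ε)^{m−1}·(1−q)^{m−1}·q·ε − 0.1·(1−q)^m·(1−2ε)^m < 0. (This inequality is the analytic core of the impossibility theorem that for any number of bidders n = m+1 > 2 and any q < 1, there exists a per-item value distribution under which truthful bidding in VCG is not a Bayesian Nash equilibrium, i.e., the global granularity threshold equals 1 for n > 2.) -/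
set_option maxHeartbeats 1000000


theorem stmt_6 (m : ℕ) (hm : 2 ≤ m) (q : ℝ) (hq0 : 0 < q) (hq1 : q < 1) :
    let ε : ℝ := min (min ((1 - q) / (3000 * q * m)) (1 / 1000))
      (min ((1 - (1 / 5 : ℝ) ^ ((1 : ℝ) / m)) / 2)
        (1 - (1 - (1 - q) ^ m / 300) ^ ((1 : ℝ) / m)))
    0 < ε ∧
      3 * (1 - (1 - ε) ^ m) + 0.3 * m * (1 - 2 * ε) ^ (m - 1) * (1 - q) ^ (m - 1) * q * ε
        - 0.1 * (1 - q) ^ m * (1 - 2 * ε) ^ m < 0 := by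
  intro ε
  have hmpos : 0 < m := by omega
  have hmR : (0:ℝ) < (m:ℝ) := by exact_mod_cast hmpos
  have hmne : (m:ℝ) ≠ 0 := ne_of_gt hmR
  have hq' : (0:ℝ) < 1 - q := by linarith
  have hP : (0:ℝ) < (1 - q) ^ m := pow_pos hq' m
  have hP1 : (1 - q) ^ m ≤ 1 := pow_le_one₀ (le_of_lt hq') (by linarith)
  -- roundtrip lemma
  have key : ∀ x : ℝ, 0 ≤ x → (x ^ ((1:ℝ)/m)) ^ m = x := by
    intro x hx
    rw [← Real.rpow_natCast (x ^ ((1:ℝ)/m)) m, ← Real.rpow_mul hx, one_div,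
      inv_mul_cancel₀ hmne, Real.rpow_one]
  set b : ℝ := 1 - (1 - q) ^ m / 300 with hb
  have hb0 : 0 ≤ b := by simp only [hb]; nlinarith
  have hb1 : b < 1 := by simp only [hb]; nlinarith
  have hr5 : (0:ℝ) ≤ (1 / 5 : ℝ) ^ ((1:ℝ)/m) := Real.rpow_nonneg (by norm_num) _
  have hr5lt : (1 / 5 : ℝ) ^ ((1:ℝ)/m) < 1 :=
    Real.rpow_lt_one (by norm_num) (by norm_num) (by positivity)
  have hrb : (0:ℝ) ≤ b ^ ((1:ℝ)/m) := Real.rpow_nonneg hb0 _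
  have hrblt : b ^ ((1:ℝ)/m) < 1 := Real.rpow_lt_one hb0 hb1 (by positivity)
  have hε0 : 0 < ε := by
    refine lt_min (lt_min (by positivity) (by norm_num)) (lt_min (by linarith) (by linarith))
  have hε1 : ε ≤ (1 - q) / (3000 * q * m) := (min_le_left _ _).trans (min_le_left _ _)
  have hε2 : ε ≤ 1 / 1000 := (min_le_left _ _).trans (min_le_right _ _)
  have hε3 : ε ≤ (1 - (1 / 5 : ℝ) ^ ((1:ℝ)/m)) / 2 := (min_le_right _ _).trans (min_le_left _ _)
  have hε4 : ε ≤ 1 - b ^ ((1:ℝ)/m) := (min_le_right _ _).trans (min_le_right _ _)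
  clear_value ε
  refine ⟨hε0, ?_⟩
  -- bound term A
  have hA : 1 - (1 - ε) ^ m ≤ (1 - q) ^ m / 300 := by
    have h1 : b ^ ((1:ℝ)/m) ≤ 1 - ε := by linarith
    have h2 : (b ^ ((1:ℝ)/m)) ^ m ≤ (1 - ε) ^ m := pow_le_pow_left₀ hrb h1 m
    rw [key b hb0] at h2
    simp only [hb] at h2
    linarith
  -- bound term C
  have hC : (1:ℝ)/5 ≤ (1 - 2 * ε) ^ m := by
    have h1 : (1 / 5 : ℝ) ^ ((1:ℝ)/m) ≤ 1 - 2 * ε := by linarith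
    have h2 : ((1 / 5 : ℝ) ^ ((1:ℝ)/m)) ^ m ≤ (1 - 2 * ε) ^ m := pow_le_pow_left₀ hr5 h1 m
    rwa [key (1/5) (by norm_num)] at h2
  -- bound term B
  have hw0 : (0:ℝ) ≤ 1 - 2 * ε := by linarith
  have hw1 : (1 - 2 * ε) ^ (m - 1) ≤ 1 := pow_le_one₀ hw0 (by linarith)
  have hwnn : (0:ℝ) ≤ (1 - 2 * ε) ^ (m - 1) := pow_nonneg hw0 _
  have hs : (1 - q) ^ (m - 1) * (1 - q) = (1 - q) ^ m := by
    rw [← pow_succ]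
    congr 1
    omega
  have hspos : (0:ℝ) < (1 - q) ^ (m - 1) := pow_pos hq' _
  have h5 : (m:ℝ) * q * ε ≤ (1 - q) / 3000 := by
    rw [le_div_iff₀ (by positivity)] at hε1
    nlinarith
  have hB : 0.3 * (m:ℝ) * (1 - 2 * ε) ^ (m - 1) * (1 - q) ^ (m - 1) * q * ε
      ≤ (1 - q) ^ m / 10000 := by
    have step1 : 0.3 * (m:ℝ) * (1 - 2 * ε) ^ (m - 1) * (1 - q) ^ (m - 1) * q * ε
        ≤ 0.3 * (1 - q) ^ (m - 1) * ((m:ℝ) * q * ε) := by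
      nlinarith [mul_pos (mul_pos hmR hq0) hε0, mul_pos hspos (mul_pos (mul_pos hmR hq0) hε0)]
    have step2 : 0.3 * (1 - q) ^ (m - 1) * ((m:ℝ) * q * ε)
        ≤ 0.3 * (1 - q) ^ (m - 1) * ((1 - q) / 3000) := by
      nlinarith
    have step3 : 0.3 * (1 - q) ^ (m - 1) * ((1 - q) / 3000) = (1 - q) ^ m / 10000 := by
      rw [← hs]; ring
    linarith
  have hCv : (1 - q) ^ m * (1/5) ≤ (1 - q) ^ m * ((1 - 2 * ε) ^ m) :=
    mul_le_mul_of_nonneg_left hC (le_of_lt hP)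
  linarith
end

section
/- Let n be a natural number and let a : ℕ → ℝ satisfy a(k) ≤ a(k+1) for all k < n. Then for all real numbers q, q' with 0 ≤ q ≤ q' ≤ 1, ∑_{k=0}^{n} C(n,k)·q^k·(1−q)^{n−k}·a(k) ≤ ∑_{k=0}^{n} C(n,k)·q'^k·(1−q')^{n−k}·a(k). In other words, if the sequence a is nondecreasing, then the expectation of a under the Binomial(n,q) distribution is nondecreasing in q. -/
open Finset

lemma binom_step (n : ℕ) (q : ℝ) (a : ℕ → ℝ) :
    ∑ k ∈ range (n + 2), ((n + 1).choose k : ℝ) * q ^ k * (1 - q) ^ (n + 1 - k) * a k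
    = ∑ k ∈ range (n + 1), (n.choose k : ℝ) * q ^ k * (1 - q) ^ (n - k) *
        ((1 - q) * a k + q * a (k + 1)) := by
  have hR : ∑ k ∈ range (n + 1), (n.choose k : ℝ) * q ^ k * (1 - q) ^ (n - k) *
        ((1 - q) * a k + q * a (k + 1))
      = (∑ k ∈ range (n + 1), (n.choose k : ℝ) * q ^ k * (1 - q) ^ (n + 1 - k) * a k)
        + ∑ k ∈ range (n + 1), (n.choose k : ℝ) * q ^ (k + 1) * (1 - q) ^ (n - k) * a (k + 1) := by
    rw [← Finset.sum_add_distrib]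
    refine Finset.sum_congr rfl fun k hk => ?_
    have hk' : k ≤ n := Nat.lt_succ_iff.mp (Finset.mem_range.mp hk)
    have : n + 1 - k = (n - k) + 1 := by omega
    rw [this]
    ring
  rw [hR, Finset.sum_range_succ' (f := fun k => ((n + 1).choose k : ℝ) * q ^ k * (1 - q) ^ (n + 1 - k) * a k),
    Finset.sum_range_succ' (f := fun k => (n.choose k : ℝ) * q ^ k * (1 - q) ^ (n + 1 - k) * a k)]
  simp only [Nat.choose_zero_right, pow_zero, Nat.sub_zero, Nat.succ_sub_succ]
  have hsplit : ∀ k ∈ range (n + 1),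
      (((n + 1).choose (k + 1) : ℝ)) * q ^ (k + 1) * (1 - q) ^ (n - k) * a (k + 1)
      = ((n.choose k : ℝ)) * q ^ (k + 1) * (1 - q) ^ (n - k) * a (k + 1)
        + ((n.choose (k + 1) : ℝ)) * q ^ (k + 1) * (1 - q) ^ (n - k) * a (k + 1) := by
    intro k hk
    rw [Nat.choose_succ_succ]
    push_cast
    ring
  rw [Finset.sum_congr rfl hsplit, Finset.sum_add_distrib]
  have hlast : ∑ k ∈ range (n + 1), ((n.choose (k + 1) : ℝ)) * q ^ (k + 1) * (1 - q) ^ (n - k) * a (k + 1)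
      = ∑ k ∈ range n, ((n.choose (k + 1) : ℝ)) * q ^ (k + 1) * (1 - q) ^ (n - k) * a (k + 1) := by
    rw [Finset.sum_range_succ, Nat.choose_succ_self]
    simp
  rw [hlast]
  ring

lemma binom_mono (n : ℕ) : ∀ (a : ℕ → ℝ), (∀ k < n, a k ≤ a (k + 1)) →
    ∀ (q q' : ℝ), 0 ≤ q → q ≤ q' → q' ≤ 1 →
    ∑ k ∈ range (n + 1), (n.choose k : ℝ) * q ^ k * (1 - q) ^ (n - k) * a k ≤
      ∑ k ∈ range (n + 1), (n.choose k : ℝ) * q' ^ k * (1 - q') ^ (n - k) * a k := by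
  induction n with
  | zero => intro a _ q q' _ _ _; simp
  | succ n ih =>
    intro a ha q q' hq0 hqq' hq'1
    have hq1 : q ≤ 1 := hqq'.trans hq'1
    have hq'0 : 0 ≤ q' := hq0.trans hqq'
    rw [show n + 1 + 1 = n + 2 from rfl, binom_step, binom_step]
    calc ∑ k ∈ range (n + 1), (n.choose k : ℝ) * q ^ k * (1 - q) ^ (n - k) *
            ((1 - q) * a k + q * a (k + 1))
        ≤ ∑ k ∈ range (n + 1), (n.choose k : ℝ) * q ^ k * (1 - q) ^ (n - k) *
            ((1 - q') * a k + q' * a (k + 1)) := by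
          refine Finset.sum_le_sum fun k hk => ?_
          have hak : a k ≤ a (k + 1) := ha k (by have := Finset.mem_range.mp hk; omega)
          have hw : (0:ℝ) ≤ (n.choose k : ℝ) * q ^ k * (1 - q) ^ (n - k) :=
            mul_nonneg (mul_nonneg (Nat.cast_nonneg _) (pow_nonneg hq0 _))
              (pow_nonneg (by linarith) _)
          have : (1 - q') * a k + q' * a (k + 1) - ((1 - q) * a k + q * a (k + 1))
              = (q' - q) * (a (k + 1) - a k) := by ring
          nlinarith [mul_nonneg (sub_nonneg.mpr hqq') (sub_nonneg.mpr hak), hw,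
            mul_nonneg hw (mul_nonneg (sub_nonneg.mpr hqq') (sub_nonneg.mpr hak))]
      _ ≤ ∑ k ∈ range (n + 1), (n.choose k : ℝ) * q' ^ k * (1 - q') ^ (n - k) *
            ((1 - q') * a k + q' * a (k + 1)) := by
          refine ih (fun k => (1 - q') * a k + q' * a (k + 1)) ?_ q q' hq0 hqq' hq'1
          intro k hk
          have h1 : a k ≤ a (k + 1) := ha k (by omega)
          have h2 : a (k + 1) ≤ a (k + 2) := ha (k + 1) (by omega)
          show (1 - q') * a k + q' * a (k + 1) ≤ (1 - q') * a (k + 1) + q' * a (k + 2)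
          nlinarith [mul_le_mul_of_nonneg_left h1 (by linarith : (0:ℝ) ≤ 1 - q'),
            mul_le_mul_of_nonneg_left h2 hq'0]

theorem stmt_7 (n : ℕ) (a : ℕ → ℝ) (ha : ∀ k < n, a k ≤ a (k + 1))
    (q q' : ℝ) (hq0 : 0 ≤ q) (hqq' : q ≤ q') (hq'1 : q' ≤ 1) :
    ∑ k ∈ Finset.range (n + 1), (n.choose k : ℝ) * q ^ k * (1 - q) ^ (n - k) * a k ≤
      ∑ k ∈ Finset.range (n + 1), (n.choose k : ℝ) * q' ^ k * (1 - q') ^ (n - k) * a k := by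
  exact binom_mono n a ha q q' hq0 hqq' hq'1
end

section
/- For all integers m, k with 2 ≤ k ≤ m−1 and all real numbers x, y with 0 ≤ y ≤ x ≤ 1, the inequality (2/(k+1) − 1/k)·y^{k+1}·(x+y)^{m−k} + y^{m+1}·∑_{i=0}^{m−k} C(m−k, i)·(1/(m−i) − 2/(m−i+1)) ≥ 0 holds, where C(m−k,i) is the binomial coefficient. (This expression lower-bounds the difference in expected utilities between truthful bidding and the attack (1,x),(1,y) for a 1-type bidder with value 1 facing k one-item-demand adversaries and m−k two-item-demand adversaries with per-item values uniform on [0,1], so the inequality establishes that this difference is nonnegative.) -/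
lemma aux_mono_stmt12 (k j : ℕ) (hk : 2 ≤ k) (hjk : k ≤ j) :
    2 / ((j:ℝ) + 1) - 1 / (j:ℝ) ≤ 2 / ((k:ℝ) + 1) - 1 / (k:ℝ) := by
  have hk2 : (2:ℝ) ≤ k := by exact_mod_cast hk
  have hk0 : (0:ℝ) < k := by linarith
  have hj0 : (0:ℝ) < j := by
    have : (k:ℝ) ≤ j := by exact_mod_cast hjk
    linarith
  rcases eq_or_lt_of_le hjk with h | h
  · subst h; exact le_rfl
  · have hj1 : (k:ℝ) + 1 ≤ j := by exact_mod_cast h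
    have e1 : 2 / ((j:ℝ) + 1) - 1 / (j:ℝ) = ((j:ℝ) - 1) / ((j:ℝ) * ((j:ℝ) + 1)) := by
      field_simp; ring
    have e2 : 2 / ((k:ℝ) + 1) - 1 / (k:ℝ) = ((k:ℝ) - 1) / ((k:ℝ) * ((k:ℝ) + 1)) := by
      field_simp; ring
    rw [e1, e2, div_le_div_iff₀ (by positivity) (by positivity)]
    nlinarith [mul_nonneg (sub_nonneg.2 hj1)
      (by nlinarith : (0:ℝ) ≤ ((k:ℝ) - 1) * j - ((k:ℝ) + 1))]

theorem stmt_12 (m k : ℕ) (hk : 2 ≤ k) (hkm : k ≤ m - 1)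
    (x y : ℝ) (hy : 0 ≤ y) (hyx : y ≤ x) (hx : x ≤ 1) :
    (2 / ((k : ℝ) + 1) - 1 / k) * y ^ (k + 1) * (x + y) ^ (m - k)
      + y ^ (m + 1) *
        ∑ i ∈ Finset.range (m - k + 1),
          ((m - k).choose i : ℝ) * (1 / ((m : ℝ) - i) - 2 / ((m : ℝ) - i + 1)) ≥ 0 := by
  have hm : k + 1 ≤ m := by omega
  have hk2 : (2:ℝ) ≤ k := by exact_mod_cast hk
  have hk0 : (0:ℝ) < k := by linarith
  set c : ℝ := 2 / ((k:ℝ) + 1) - 1 / k with hcdef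
  have hc : 0 ≤ c := by
    rw [hcdef, sub_nonneg, div_le_div_iff₀ (by positivity) (by positivity)]
    nlinarith
  -- bound on the sum
  have hsum : (2:ℝ) ^ (m - k) * (-c)
      ≤ ∑ i ∈ Finset.range (m - k + 1),
          ((m - k).choose i : ℝ) * (1 / ((m : ℝ) - i) - 2 / ((m : ℝ) - i + 1)) := by
    have hstep : ∑ i ∈ Finset.range (m - k + 1), ((m - k).choose i : ℝ) * (-c)
        ≤ ∑ i ∈ Finset.range (m - k + 1),
          ((m - k).choose i : ℝ) * (1 / ((m : ℝ) - i) - 2 / ((m : ℝ) - i + 1)) := by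
      apply Finset.sum_le_sum
      intro i hi
      have hi' : i ≤ m - k := by
        simpa [Finset.mem_range, Nat.lt_succ_iff] using hi
      have hmi : k ≤ m - i := by omega
      have him : i ≤ m := by omega
      have key := aux_mono_stmt12 k (m - i) hk hmi
      have hcast : ((m - i : ℕ):ℝ) = (m:ℝ) - i := by
        push_cast [him]; ring
      rw [hcast] at key
      apply mul_le_mul_of_nonneg_left _ (by positivity)
      rw [hcdef]
      linarith
    calc (2:ℝ) ^ (m - k) * (-c)
        = ∑ i ∈ Finset.range (m - k + 1), ((m - k).choose i : ℝ) * (-c) := by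
          rw [← Finset.sum_mul]
          congr 1
          rw [← Nat.cast_sum, Nat.sum_range_choose]
          push_cast; ring
      _ ≤ _ := hstep
  -- first term bound
  have hxy : (2:ℝ) * y ≤ x + y := by linarith
  have h2y : (0:ℝ) ≤ 2 * y := by linarith
  have hpow : ((2:ℝ) * y) ^ (m - k) ≤ (x + y) ^ (m - k) :=
    pow_le_pow_left₀ h2y hxy _
  have hexp : y ^ (k + 1) * y ^ (m - k) = y ^ (m + 1) := by
    rw [← pow_add]
    congr 1
    omega
  have h1 : c * (2:ℝ) ^ (m - k) * y ^ (m + 1) ≤ c * y ^ (k + 1) * (x + y) ^ (m - k) := by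
    have : c * y ^ (k + 1) * ((2 * y) ^ (m - k)) ≤ c * y ^ (k + 1) * (x + y) ^ (m - k) :=
      mul_le_mul_of_nonneg_left hpow (by positivity)
    calc c * (2:ℝ) ^ (m - k) * y ^ (m + 1)
        = c * y ^ (k + 1) * ((2 * y) ^ (m - k)) := by
          rw [mul_pow, ← hexp]; ring
      _ ≤ _ := this
  have h2 : y ^ (m + 1) * ((2:ℝ) ^ (m - k) * (-c))
      ≤ y ^ (m + 1) * ∑ i ∈ Finset.range (m - k + 1),
          ((m - k).choose i : ℝ) * (1 / ((m : ℝ) - i) - 2 / ((m : ℝ) - i + 1)) :=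
    mul_le_mul_of_nonneg_left hsum (by positivity)
  rw [ge_iff_le]
  calc (0:ℝ) = c * (2:ℝ) ^ (m - k) * y ^ (m + 1) + y ^ (m + 1) * ((2:ℝ) ^ (m - k) * (-c)) := by
        ring
    _ ≤ _ := add_le_add h1 h2
end

section
/- For all integers m ≥ 2 and all real numbers x, y with 0 ≤ y ≤ x ≤ 1, the following inequality holds: (x+y)·( −2x^{m+1} − 2m(x+1)^m + 2mx(x+1)^m − 4(x+1)^m − 2y^{m+1} + 2(y+1)^{m+1} + 3·2^{m+1} − 3 ) − 2(x+y)^m·( (m−1)x² − x((m−1)²y + m + 1) + y(m(m(−y) + m + y) − 1) ) ≥ 0. (This expression equals (x+y)(m+1)2^m times the combined expected utility difference between truthful bidding and the attack (1,x),(1,y) for a 1-type bidder with value 1 against m adversaries with uniform per-item values, summed over the cases of 0, 1, and m one-item-demand adversaries; its nonnegativity, together with the nonnegativity for intermediate k, yields that the granularity threshold for 1-types under the uniform distribution is at most 1/2.) -/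
set_option maxHeartbeats 1000000

lemma quadBern (n : ℕ) (a : ℝ) (ha : 0 ≤ a) :
    1 + n*a + n*(n-1)/2*a^2 ≤ (1+a)^n := by
  induction n with
  | zero => norm_num
  | succ k ih =>
    have hk : (0:ℝ) ≤ (k:ℝ) * ((k:ℝ) - 1) := by
      rcases Nat.eq_zero_or_pos k with h | h
      · simp [h]
      · have : (1:ℝ) ≤ (k:ℝ) := by exact_mod_cast h
        nlinarith
    have h1 : (0:ℝ) ≤ 1 + a := by linarith
    have h2 := mul_le_mul_of_nonneg_left ih h1
    have h3 : (1+a)^(k+1) = (1+a)*(1+a)^k := by ring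
    rw [h3]
    push_cast
    push_cast at h2
    nlinarith [mul_nonneg (mul_nonneg hk ha) (mul_nonneg ha ha)]

lemma keyPow (n : ℕ) (z : ℝ) (h0 : 0 ≤ z) (h2 : z ≤ 2) :
    z^n * (8 + 4*n*(2-z) + n*(n-1)*(2-z)^2) ≤ 8 * 2^n := by
  set t : ℝ := (2 - z)/2 with ht
  have ht0 : 0 ≤ t := by simp [ht]; linarith
  have ht1 : t ≤ 1 := by simp [ht]; linarith
  have hz : z = 2*(1-t) := by simp [ht]; ring
  have h1t : 0 ≤ (1-t) := by linarith
  have hA : (1-t)^n * (1+t)^n ≤ 1 := by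
    rw [← mul_pow]
    have : (1-t)*(1+t) = 1 - t^2 := by ring
    rw [this]
    exact pow_le_one₀ (by nlinarith) (by nlinarith)
  have hB : 1 + n*t + n*(n-1)/2*t^2 ≤ (1+t)^n := quadBern n t ht0
  have hzn : z^n = 2^n * (1-t)^n := by rw [hz, mul_pow]
  have hfac : 8 + 4*n*(2-z) + n*(n-1)*(2-z)^2 = 8*(1 + n*t + n*(n-1)/2*t^2) := by
    have : 2 - z = 2*t := by rw [hz]; ring
    rw [this]; ring
  rw [hzn, hfac]
  have hpn : (0:ℝ) ≤ (1-t)^n := pow_nonneg h1t n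
  have h2n : (0:ℝ) ≤ 2^n := by positivity
  have step : (1-t)^n * (8*(1 + n*t + n*(n-1)/2*t^2)) ≤ (1-t)^n * (8 * (1+t)^n) := by
    apply mul_le_mul_of_nonneg_left _ hpn
    linarith
  calc 2^n * (1-t)^n * (8*(1 + n*t + n*(n-1)/2*t^2))
      ≤ 2^n * ((1-t)^n * (8 * (1+t)^n)) := by
        rw [mul_assoc]; exact mul_le_mul_of_nonneg_left step h2n
    _ = 8 * 2^n * ((1-t)^n * (1+t)^n) := by ring
    _ ≤ 8 * 2^n * 1 := mul_le_mul_of_nonneg_left hA (by positivity)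
    _ = 8 * 2^n := by ring

lemma hGkey (N x y : ℝ) (hy : 0 ≤ y) (hyx : y ≤ x) (hx : x ≤ 1) (hN0 : (0:ℝ) ≤ N) :
    32 * ((N + 1) * x ^ 2 - x * ((N + 1) ^ 2 * y + N + 2 + 1)
          + y * ((N+2) * ((N+2) * (-y) + N+2 + y) - 1))
      ≤ 7 * (8 + 4*(N+1)*(2-(x+y)) + (N+1)*N*(2-(x+y))^2) := by
  have hC2 : (0:ℝ) ≤ 28-60*y+39*y^2-28*x+46*x*y+7*x^2 := by
    nlinarith [sq_nonneg (x+y-1), sq_nonneg (x-y), mul_nonneg hy (sub_nonneg.2 hyx),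
      sq_nonneg (1-x), sq_nonneg y, mul_nonneg hy (by linarith : (0:ℝ) ≤ 1-x)]
  have hC1 : (0:ℝ) ≤ 84-184*y+103*y^2-24*x+78*x*y-25*x^2 := by
    nlinarith [sq_nonneg (x+y-1), sq_nonneg (x-y), mul_nonneg hy (sub_nonneg.2 hyx),
      sq_nonneg (1-x), mul_nonneg hy (by linarith : (0:ℝ) ≤ 1-x)]
  have hC0 : (0:ℝ) ≤ 112-124*y+64*y^2+68*x+32*x*y-32*x^2 := by
    nlinarith [sq_nonneg (x+y-1), mul_nonneg hy (sub_nonneg.2 hyx), sq_nonneg (1-x),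
      mul_nonneg (le_trans hy hyx) (by linarith : (0:ℝ) ≤ 1-x)]
  nlinarith [mul_nonneg (mul_nonneg hN0 hN0) hC2, mul_nonneg hN0 hC1, hC0]

lemma mainRed (n : ℕ) (x y : ℝ) (hy : 0 ≤ y) (hyx : y ≤ x) (hx : x ≤ 1)
    (hqG : 2 * (x+y)^(n+1) *
        (((n:ℝ) + 1) * x ^ 2 - x * (((n:ℝ) + 1) ^ 2 * y + (n:ℝ) + 2 + 1)
          + y * (((n:ℝ)+2) * (((n:ℝ)+2) * (-y) + (n:ℝ)+2 + y) - 1))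
      ≤ 2 * 2^(n+2) - 3) :
    (x + y) *
        (-2 * x ^ (n + 2 + 1) - 2 * ((n:ℝ)+2) * (x + 1) ^ (n+2) + 2 * ((n:ℝ)+2) * x * (x + 1) ^ (n+2)
          - 4 * (x + 1) ^ (n+2) - 2 * y ^ (n + 2 + 1) + 2 * (y + 1) ^ (n + 2 + 1)
          + 3 * 2 ^ (n + 2 + 1) - 3)
      - 2 * (x + y) ^ (n+2) *
        (((n:ℝ) + 1) * x ^ 2 - x * (((n:ℝ) + 1) ^ 2 * y + (n:ℝ) + 2 + 1)
          + y * (((n:ℝ)+2) * (((n:ℝ)+2) * (-y) + (n:ℝ)+2 + y) - 1)) ≥ 0 := by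
  have hx0 : 0 ≤ x := le_trans hy hyx
  have hxy0 : 0 ≤ x + y := by linarith
  have hp := keyPow (n+2) (x+1) (by linarith) (by linarith)
  push_cast at hp
  have hppos : (0:ℝ) ≤ (x+1)^(n+2) := by positivity
  have hpB : (2*((n:ℝ)+2)*(1-x) + 4) * (x+1)^(n+2) ≤ 4 * 2^(n+2) := by
    have hn2 : (0:ℝ) ≤ ((n:ℝ)+2)-1 := by
      have := Nat.cast_nonneg (α := ℝ) n; linarith
    nlinarith [hp, mul_nonneg hppos
      (mul_nonneg (mul_nonneg (by positivity : (0:ℝ) ≤ (n:ℝ)+2) hn2) (sq_nonneg (1-x)))]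
  have hd : (1:ℝ) + y^(n+3) ≤ (y+1)^(n+3) := by
    have h := pow_add_pow_le (zero_le_one) hy (Nat.succ_ne_zero (n+2))
    calc (1:ℝ) + y^(n+3) = 1^(n+3) + y^(n+3) := by norm_num
      _ ≤ (1+y)^(n+3) := h
      _ = (y+1)^(n+3) := by ring_nf
  have hs : x^(n+3) ≤ 1 := pow_le_one₀ hx0 hx
  have e1 : (n+2+1 : ℕ) = n+3 := by omega
  rw [e1]
  have e4 : (2:ℝ) ^ (n+3) = 2 * 2^(n+2) := by ring
  have hfac : (x+y)^(n+2) = (x+y) * (x+y)^(n+1) := by ring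
  rw [e4, hfac]
  have key : 0 ≤ (-2 * x ^ (n+3) - 2 * ((n:ℝ)+2) * (x + 1) ^ (n+2) + 2 * ((n:ℝ)+2) * x * (x + 1) ^ (n+2)
          - 4 * (x + 1) ^ (n+2) - 2 * y ^ (n+3) + 2 * (y + 1) ^ (n+3)
          + 3 * (2 * 2 ^ (n+2)) - 3)
        - 2 * (x+y)^(n+1) *
        (((n:ℝ) + 1) * x ^ 2 - x * (((n:ℝ) + 1) ^ 2 * y + (n:ℝ) + 2 + 1)
          + y * (((n:ℝ)+2) * (((n:ℝ)+2) * (-y) + (n:ℝ)+2 + y) - 1)) := by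
    nlinarith [hpB, hqG, hd, hs]
  nlinarith [mul_nonneg hxy0 key]

theorem stmt_14 (m : ℕ) (hm : 2 ≤ m) (x y : ℝ) (hy : 0 ≤ y) (hyx : y ≤ x) (hx : x ≤ 1) :
    (x + y) *
        (-2 * x ^ (m + 1) - 2 * m * (x + 1) ^ m + 2 * m * x * (x + 1) ^ m
          - 4 * (x + 1) ^ m - 2 * y ^ (m + 1) + 2 * (y + 1) ^ (m + 1)
          + 3 * 2 ^ (m + 1) - 3)
      - 2 * (x + y) ^ m *
        (((m : ℝ) - 1) * x ^ 2 - x * (((m : ℝ) - 1) ^ 2 * y + m + 1)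
          + y * ((m : ℝ) * ((m : ℝ) * (-y) + m + y) - 1)) ≥ 0 := by
  obtain ⟨n, rfl⟩ : ∃ n, m = n + 2 := ⟨m - 2, by omega⟩
  have hx0 : 0 ≤ x := le_trans hy hyx
  have hxy0 : 0 ≤ x + y := by linarith
  have hqG : 2 * (x+y)^(n+1) *
      (((n:ℝ) + 1) * x ^ 2 - x * (((n:ℝ) + 1) ^ 2 * y + (n:ℝ) + 2 + 1)
        + y * (((n:ℝ)+2) * (((n:ℝ)+2) * (-y) + (n:ℝ)+2 + y) - 1))
      ≤ 2 * 2^(n+2) - 3 := by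
    match n with
    | 0 =>
      have hG0 : 0 ≤ (x+y) * ((x-y) * (3 - x - 2*y)) :=
        mul_nonneg hxy0 (mul_nonneg (by linarith) (by linarith))
      push_cast
      norm_num
      nlinarith [hG0, mul_nonneg hxy0 (mul_nonneg hx0 hy)]
    | 1 =>
      have hG : ((1:ℝ) + 1) * x ^ 2 - x * (((1:ℝ) + 1) ^ 2 * y + (1:ℝ) + 2 + 1)
          + y * (((1:ℝ)+2) * (((1:ℝ)+2) * (-y) + (1:ℝ)+2 + y) - 1) ≤ 13/8 := by
        nlinarith [sq_nonneg (x - y), sq_nonneg (x+y-1), mul_nonneg hy (sub_nonneg.2 hyx)]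
      have hq2 : (x+y)^(1+1) ≤ 4 := by
        have h : (x+y)^(1+1) = (x+y)*(x+y) := by ring
        rw [h]; nlinarith
      have h1 := mul_le_mul_of_nonneg_left hG
        (by positivity : (0:ℝ) ≤ (x+y)^(1+1))
      push_cast
      nlinarith [h1, hq2]
    | (k+2) =>
      have hq := keyPow (k+3) (x+y) hxy0 (by linarith)
      push_cast at hq
      have hG := hGkey ((k:ℝ)+2) x y hy hyx hx (by positivity)
      have hqpos' : (0:ℝ) ≤ (x+y)^(k+3) := pow_nonneg hxy0 _
      have h1 := mul_le_mul_of_nonneg_left hG hqpos'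
      have hT : (16:ℝ) ≤ 2^(k+4) := by
        calc (16:ℝ) = 2^4 := by norm_num
        _ ≤ 2^(k+4) := by
            apply pow_le_pow_right₀ (by norm_num)
            omega
      have hpw : (2:ℝ)^(k+4) = 2*2^(k+3) := by ring
      have e : (k+2+1 : ℕ) = k+3 := by omega
      have e2 : (k+2+2 : ℕ) = k+4 := by omega
      rw [e, e2]
      push_cast
      nlinarith [h1, hq, hT, hpw, hqpos']
  have main := mainRed n x y hy hyx hx hqG
  have hcast : ((n+2 : ℕ) : ℝ) = (n:ℝ) + 2 := by push_cast; ring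
  push_cast [hcast] at main ⊢
  nlinarith [main]
end

section
/- For all integers m ≥ 1 and all real numbers x, y with 0 ≤ x ≤ 1 and 0 ≤ y ≤ 1, the inequality −2x^{m+1} − 2m(x+1)^m + 2mx(x+1)^m − 4(x+1)^m − 2y^{m+1} + 2(y+1)^{m+1} + 3·2^{m+1} − 3 ≥ 2^{m−1} − 7 holds. -/
lemma key15 (m : ℕ) (t : ℝ) (h1 : 1 ≤ t) (h2 : t ≤ 2) :
    ((m : ℝ) + 1) * (2 - t) * t ^ m + t ^ (m + 1) ≤ 2 ^ (m + 1) := by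
  induction m with
  | zero => simp
  | succ n ih =>
      have ht0 : (0:ℝ) ≤ t := by linarith
      have hn0 : (0:ℝ) ≤ (n:ℝ) := Nat.cast_nonneg n
      have h3 : (0:ℝ) ≤ t ^ n := pow_nonneg ht0 n
      push_cast
      rw [pow_succ, pow_succ, pow_succ, pow_succ]
      rw [pow_succ] at ih
      nlinarith [mul_nonneg h3 (sq_nonneg (2 - t)),
        mul_nonneg (mul_nonneg hn0 h3) (sq_nonneg (2 - t)), ih]

theorem stmt_15 (m : ℕ) (hm : 1 ≤ m) (x y : ℝ) (hx0 : 0 ≤ x) (hx1 : x ≤ 1)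
    (hy0 : 0 ≤ y) (hy1 : y ≤ 1) :
    -2 * x ^ (m + 1) - 2 * m * (x + 1) ^ m + 2 * m * x * (x + 1) ^ m
        - 4 * (x + 1) ^ m - 2 * y ^ (m + 1) + 2 * (y + 1) ^ (m + 1)
        + 3 * 2 ^ (m + 1) - 3 ≥ (2 : ℝ) ^ (m - 1) - 7 := by
  have hK := key15 m (x + 1) (by linarith) (by linarith)
  have hX : x ^ (m + 1) ≤ 1 := pow_le_one₀ hx0 hx1
  have hY : y ^ (m + 1) + 1 ≤ (y + 1) ^ (m + 1) := by
    have := pow_add_pow_le hy0 (zero_le_one) (Nat.succ_ne_zero m)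
    simpa using this
  have hP : (2 : ℝ) ^ (m - 1) ≤ 2 ^ (m + 1) :=
    pow_le_pow_right₀ one_le_two (by omega)
  rw [pow_succ (x + 1)] at hK
  nlinarith [hK, hX, hY, hP]
end

section
/- Let θ, x, v₁, v₂, w be real numbers with 0 ≤ θ ≤ x ≤ 1, 0 ≤ v₂ ≤ v₁ ≤ 1 and 0 ≤ w. Define, for a real number c, T(c) = c − v₂ if w ≤ (v₁+v₂)/2; T(c) = c − 2w + v₁ if (v₁+v₂)/2 < w ≤ (v₁+c)/2; and T(c) = 0 otherwise. Then T(x) − T(θ) ≤ x − θ. -/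
theorem stmt_19 (θ x v₁ v₂ w : ℝ) (hθ0 : 0 ≤ θ) (hθx : θ ≤ x) (hx : x ≤ 1)
    (hv2 : 0 ≤ v₂) (hv21 : v₂ ≤ v₁) (hv1 : v₁ ≤ 1) (hw : 0 ≤ w) :
    let T : ℝ → ℝ := fun c =>
      if w ≤ (v₁ + v₂) / 2 then c - v₂
      else if w ≤ (v₁ + c) / 2 then c - 2 * w + v₁
      else 0
    T x - T θ ≤ x - θ := by
  intro T
  simp only [T]
  split_ifs <;> linarith
end
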